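/- Let G be a weighted cubic tree with at least 3 leaves, and let i and j be two distinct leaves of G. Then i and j have a common neighbor (i.e., there is a vertex adjacent to both i and j) if and only if there exists a real constant c such that d(i, l) − d(j, l) = c for every leaf l of G distinct from i and j. -/

import Mathlib

/-- A weighted cubic tree: a finite connected acyclic simple graph in which every vertex
has degree 1 or 3, with a strictly positive real weight on each edge. -/
structure WCubicTree where
  V : Type
  [fintypeV : Fintype V]
  [decEqV : DecidableEq V]
  G : SimpleGraph V
  [decAdj : DecidableRel G.Adj]
  connected : G.Connected
  acyclic : G.IsAcyclic
  cubic : ∀ v : V, G.degree v = 1 ∨ G.degree v = 3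
  w : Sym2 V → ℝ
  w_pos : ∀ e ∈ G.edgeSet, 0 < w e

attribute [instance] WCubicTree.fintypeV WCubicTree.decEqV WCubicTree.decAdj

/-- A leaf is a vertex of degree 1. -/
def WCubicTree.IsLeaf (T : WCubicTree) (v : T.V) : Prop := T.G.degree v = 1

/-- Some walk between two vertices, which exists by connectedness. -/
noncomputable def WCubicTree.walk (T : WCubicTree) (u v : T.V) : T.G.Walk u v :=
  Classical.choice (T.connected.preconnected u v)

/-- The distance between two vertices: the sum of the weights of the edges of the
(unique, by acyclicity) path joining them. -/
noncomputable def WCubicTree.dist (T : WCubicTree) (u v : T.V) : ℝ :=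
  (((T.walk u v).toPath : T.G.Path u v).val.edges.map T.w).sum

open SimpleGraph


section Generic
set_option linter.unusedSectionVars false
variable {V : Type} [Fintype V] [DecidableEq V] {G : SimpleGraph V} [DecidableRel G.Adj]

lemma leaf_not_mem_support' {x n y z : V} (huniq : ∀ m, G.Adj x m → m = n)
    (q : G.Walk y z) (hy : y ≠ x) (hn : n ∉ q.support) : x ∉ q.support := by
  intro hx
  set t := (q.takeUntil x hx).reverse with ht
  obtain ⟨m, h, r, hr⟩ := SimpleGraph.Walk.exists_eq_cons_of_ne hy.symm t
  have hmn : m = n := huniq m h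
  apply hn
  apply q.support_takeUntil_subset hx
  have : n ∈ t.support := by
    rw [hr, Walk.support_cons, ← hmn]
    exact List.mem_cons_of_mem _ r.start_mem_support
  rwa [ht, Walk.support_reverse, List.mem_reverse] at this

lemma no_third_vertex' {x n z : V} (hconn : G.Connected)
    (hxz : x ≠ z) (hnz : n ≠ z)
    (hx : ∀ m, G.Adj x m → m = n) (hn : ∀ m, G.Adj n m → m = x) : False := by
  obtain ⟨p0⟩ := hconn.preconnected x z
  set p := p0.toPath with hpdef
  obtain ⟨m, h, q, hq⟩ := SimpleGraph.Walk.exists_eq_cons_of_ne hxz p.val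
  have hmn : m = n := hx m h
  subst hmn
  obtain ⟨m', h', q', hq'⟩ := SimpleGraph.Walk.exists_eq_cons_of_ne hnz q
  have hm'x : m' = x := hn m' h'
  have hppath := p.property
  rw [hq, Walk.cons_isPath_iff] at hppath
  apply hppath.2
  rw [hq', Walk.support_cons]
  apply List.mem_cons_of_mem
  rw [← hm'x]
  exact q'.start_mem_support

lemma adj_mem_support_eq' {y z : V} (hacy : G.IsAcyclic) (p : G.Walk y z) (hp : p.IsPath)
    {m : V} (hm : m ∈ p.support) (hadj : G.Adj m z) : m = p.reverse.getVert 1 := by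
  have hq : (p.dropUntil m hm).IsPath := hp.dropUntil hm
  have huniq := hacy.path_unique ⟨p.dropUntil m hm, hq⟩ (SimpleGraph.Path.singleton hadj)
  have hdrop : p.dropUntil m hm = Walk.cons hadj Walk.nil := congrArg Subtype.val huniq
  have hspec : (p.takeUntil m hm).append (Walk.cons hadj Walk.nil) = p := by
    rw [← hdrop]; exact p.take_spec hm
  rw [← hspec, Walk.reverse_append, Walk.reverse_cons, Walk.reverse_nil, Walk.nil_append,
    Walk.cons_append, Walk.getVert_cons_succ, Walk.getVert_zero]

lemma exists_leaf_path' (hacy : G.IsAcyclic) (hcubic : ∀ v : V, G.degree v = 1 ∨ G.degree v = 3)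
    {x y : V} (hxy : G.Adj x y) :
    ∃ (l : V) (q : G.Walk y l), q.IsPath ∧ x ∉ q.support ∧ G.degree l = 1 := by
  suffices h : ∀ (n : ℕ) (z : V) (p : G.Walk y z), p.IsPath → x ∉ p.support →
      Fintype.card V ≤ p.length + n →
      ∃ (l : V) (q : G.Walk y l), q.IsPath ∧ x ∉ q.support ∧ G.degree l = 1 by
    refine h (Fintype.card V) y Walk.nil Walk.IsPath.nil ?_ (by simp)
    simp [hxy.ne]
  intro n
  induction n with
  | zero =>
    intro z p hp hx hcard
    have := hp.length_lt
    omega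
  | succ n ih =>
    intro z p hp hx hcard
    rcases hcubic z with hz | hz
    · exact ⟨z, p, hp, hx, hz⟩
    · have hS : ((G.neighborFinset z).filter (· ∈ p.support)).card ≤ 1 := by
        apply Finset.card_le_one.mpr
        intro a ha b hb
        simp only [Finset.mem_filter, SimpleGraph.mem_neighborFinset] at ha hb
        rw [adj_mem_support_eq' hacy p hp ha.2 ha.1.symm,
          adj_mem_support_eq' hacy p hp hb.2 hb.1.symm]
      have hNB : ¬ (G.neighborFinset z ⊆
          insert x ((G.neighborFinset z).filter (· ∈ p.support))) := by
        intro hsub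
        have h1 := Finset.card_le_card hsub
        have h2 := Finset.card_insert_le x ((G.neighborFinset z).filter (· ∈ p.support))
        rw [SimpleGraph.card_neighborFinset_eq_degree] at h1
        omega
      obtain ⟨m, hmN, hmB⟩ := Finset.not_subset.mp hNB
      rw [SimpleGraph.mem_neighborFinset] at hmN
      simp only [Finset.mem_insert, Finset.mem_filter, SimpleGraph.mem_neighborFinset,
        not_or, not_and] at hmB
      have hmx : m ≠ x := hmB.1
      have hms : m ∉ p.support := hmB.2 hmN
      have hcp : (p.concat hmN).IsPath := by
        rw [Walk.isPath_def, Walk.support_concat]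
        simp [List.nodup_append, hp.support_nodup, hms]
        exact fun a ha h => hms (h ▸ ha)
      refine ih m (p.concat hmN) hcp ?_ ?_
      · rw [Walk.support_concat, List.mem_append]
        push_neg
        exact ⟨hx, by simpa using Ne.symm hmx⟩
      · rw [Walk.length_concat]; omega

end Generic

namespace WCubicTree
variable (T : WCubicTree)

lemma dist_eq {u v : T.V} (p : T.G.Walk u v) (hp : p.IsPath) :
    T.dist u v = (p.edges.map T.w).sum := by
  have := T.acyclic.path_unique (T.walk u v).toPath ⟨p, hp⟩
  rw [dist, this]

lemma dist_pos {u v : T.V} (huv : u ≠ v) : 0 < T.dist u v := by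
  set p := (T.walk u v).toPath with hp
  rw [dist]
  obtain ⟨x, h, q, hq⟩ := SimpleGraph.Walk.exists_eq_cons_of_ne huv p.val
  rw [hq]
  simp only [SimpleGraph.Walk.edges_cons, List.map_cons, List.sum_cons]
  have h1 : 0 < T.w s(u, x) := T.w_pos _ h
  have h2 : 0 ≤ (q.edges.map T.w).sum := by
    apply List.sum_nonneg
    intro x hx
    simp only [List.mem_map] at hx
    obtain ⟨e, he, rfl⟩ := hx
    exact (T.w_pos e (q.edges_subset_edgeSet he)).le
  linarith

/-- additivity along a path -/
lemma dist_add {a b z : T.V} (p : T.G.Walk a b) (hp : p.IsPath) (hz : z ∈ p.support) :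
    T.dist a b = T.dist a z + T.dist z b := by
  rw [T.dist_eq p hp, T.dist_eq (p.takeUntil z hz) (hp.takeUntil hz),
    T.dist_eq (p.dropUntil z hz) (hp.dropUntil hz)]
  conv_lhs => rw [← p.take_spec hz]
  rw [SimpleGraph.Walk.edges_append, List.map_append, List.sum_append]

/-- a leaf has a unique neighbor -/
lemma leaf_adj_eq {x a b : T.V} (hx : T.G.degree x = 1) (ha : T.G.Adj x a) (hb : T.G.Adj x b) :
    a = b := by
  rw [← T.G.card_neighborFinset_eq_degree] at hx
  obtain ⟨c, hc⟩ := Finset.card_eq_one.mp hx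
  have ha' : a ∈ T.G.neighborFinset x := by rwa [SimpleGraph.mem_neighborFinset]
  have hb' : b ∈ T.G.neighborFinset x := by rwa [SimpleGraph.mem_neighborFinset]
  rw [hc, Finset.mem_singleton] at ha' hb'
  rw [ha', hb']

lemma leaf_dist_cons {i v l : T.V} (hi : T.IsLeaf i) (hiv : T.G.Adj i v) (hl : l ≠ i) :
    T.dist i l = T.w s(i, v) + T.dist v l := by
  set p := (T.walk i l).toPath with hp
  obtain ⟨x, h, q, hq⟩ := SimpleGraph.Walk.exists_eq_cons_of_ne (Ne.symm hl) p.val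
  have hxv : x = v := T.leaf_adj_eq hi h hiv
  subst hxv
  have hqp : q.IsPath := by
    have := p.property; rw [hq] at this; exact this.of_cons
  rw [dist, hq]
  simp only [SimpleGraph.Walk.edges_cons, List.map_cons, List.sum_cons]
  rw [T.dist_eq q hqp]



lemma engine {i j u v : T.V} (hi : T.IsLeaf i) (hj : T.IsLeaf j)
    (hiu : T.G.Adj i u) (hjv : T.G.Adj j v) (huv : u ≠ v) (hdeg : T.G.degree u = 3) :
    ∃ l : T.V, T.IsLeaf l ∧ l ≠ i ∧ l ≠ j ∧
      T.dist i l - T.dist j l = T.w s(i,u) - T.w s(j,v) - T.dist v u := by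
  classical
  set p0 := ((T.walk u v).toPath : T.G.Path u v).val with hp0def
  have hp0 : p0.IsPath := (T.walk u v).toPath.property
  obtain ⟨a, hua, r0, hr0⟩ := SimpleGraph.Walk.exists_eq_cons_of_ne huv p0
  -- pick b, a neighbor of u distinct from i and a
  have hNB : ¬ (T.G.neighborFinset u ⊆ {i, a}) := by
    intro hsub
    have h1 := Finset.card_le_card hsub
    have h2 : ({i, a} : Finset T.V).card ≤ 2 := Finset.card_insert_le _ _ |>.trans (by simp)
    rw [SimpleGraph.card_neighborFinset_eq_degree, hdeg] at h1
    omega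
  obtain ⟨b, hbN, hbX⟩ := Finset.not_subset.mp hNB
  rw [SimpleGraph.mem_neighborFinset] at hbN
  simp only [Finset.mem_insert, Finset.mem_singleton, not_or] at hbX
  obtain ⟨hbi, hba⟩ := hbX
  -- Claim D : b ∉ p0.support
  have hbp0 : b ∉ p0.support := by
    intro hmem
    have hb' : b ∈ p0.reverse.support := by
      rwa [Walk.support_reverse, List.mem_reverse]
    have := adj_mem_support_eq' T.acyclic p0.reverse hp0.reverse hb' hbN.symm
    rw [Walk.reverse_reverse] at this
    apply hba
    rw [this, hr0, Walk.getVert_cons_succ, Walk.getVert_zero]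
  -- leaf l1 in direction b
  obtain ⟨l1, q1, hq1, hq1u, hl1⟩ := exists_leaf_path' T.acyclic T.cubic hbN
  -- Claim E : supports of q1 and p0 are disjoint
  have hE : ∀ z' ∈ q1.support, z' ∉ p0.support := by
    intro z' hz1 hz0
    have hs1 : (p0.takeUntil z' hz0).IsPath := hp0.takeUntil hz0
    have htk : (q1.takeUntil z' hz1).IsPath := hq1.takeUntil hz1
    have hu1 : u ∉ (q1.takeUntil z' hz1).support := fun h => hq1u (q1.support_takeUntil_subset hz1 h)
    have hs2 : (Walk.cons hbN (q1.takeUntil z' hz1)).IsPath := htk.cons hu1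
    have huniq := T.acyclic.path_unique ⟨p0.takeUntil z' hz0, hs1⟩
      ⟨Walk.cons hbN (q1.takeUntil z' hz1), hs2⟩
    have hsupp : (p0.takeUntil z' hz0).support = (Walk.cons hbN (q1.takeUntil z' hz1)).support :=
      congrArg (Walk.support ∘ Subtype.val) huniq
    apply hbp0
    apply p0.support_takeUntil_subset hz0
    rw [hsupp, Walk.support_cons]
    exact List.mem_cons_of_mem _ (q1.takeUntil z' hz1).start_mem_support
  -- l1 ≠ i
  have hiq1 : i ∉ q1.support :=
    leaf_not_mem_support' (fun m hm => T.leaf_adj_eq hi hm hiu) q1 hbi hq1u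
  have hl1i : l1 ≠ i := fun h => hiq1 (h ▸ q1.end_mem_support)
  -- l1 ≠ j
  have hbj : b ≠ j := by
    intro h
    exact huv (T.leaf_adj_eq hj (h ▸ hbN.symm) hjv)
  have hvq1 : v ∉ q1.support := fun h => hE v h p0.end_mem_support
  have hjq1 : j ∉ q1.support :=
    leaf_not_mem_support' (fun m hm => T.leaf_adj_eq hj hm hjv) q1 hbj hvq1
  have hl1j : l1 ≠ j := fun h => hjq1 (h ▸ q1.end_mem_support)
  -- the walk from v to l1 through u
  have hW2 : (p0.reverse.append (Walk.cons hbN q1)).IsPath := by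
    rw [Walk.isPath_def, Walk.support_append, Walk.support_cons, List.tail_cons]
    apply List.Nodup.append hp0.reverse.support_nodup hq1.support_nodup
    intro x hx1 hx2
    rw [Walk.support_reverse, List.mem_reverse] at hx1
    exact hE x hx2 hx1
  have hu2 : u ∈ (p0.reverse.append (Walk.cons hbN q1)).support := by
    rw [Walk.mem_support_append_iff]
    exact Or.inl p0.reverse.end_mem_support
  have hdvl : T.dist v l1 = T.dist v u + T.dist u l1 :=
    T.dist_add _ hW2 hu2
  have hdil : T.dist i l1 = T.w s(i,u) + T.dist u l1 := T.leaf_dist_cons hi hiu hl1i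
  have hdjl : T.dist j l1 = T.w s(j,v) + T.dist v l1 := T.leaf_dist_cons hj hjv hl1j
  exact ⟨l1, hl1, hl1i, hl1j, by rw [hdil, hdjl, hdvl]; ring⟩

end WCubicTree

/-- In a weighted cubic tree with at least 3 leaves, two distinct leaves `i`, `j` have a
common neighbor iff `d(i,l) - d(j,l)` is constant over all leaves `l` distinct from
`i` and `j`. -/
theorem cherry_iff_constant_difference
    (T : WCubicTree)
    (hleaves : 3 ≤ Set.ncard {v : T.V | T.IsLeaf v})
    (i j : T.V) (hi : T.IsLeaf i) (hj : T.IsLeaf j) (hij : i ≠ j) :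
    (∃ v : T.V, T.G.Adj v i ∧ T.G.Adj v j) ↔
      ∃ c : ℝ, ∀ l : T.V, T.IsLeaf l → l ≠ i → l ≠ j →
        T.dist i l - T.dist j l = c := by
  constructor
  · rintro ⟨v, hvi, hvj⟩
    refine ⟨T.w s(i, v) - T.w s(j, v), fun l hl hli hlj => ?_⟩
    rw [T.leaf_dist_cons hi hvi.symm hli, T.leaf_dist_cons hj hvj.symm hlj]
    ring
  · rintro ⟨c, hc⟩
    by_contra hno
    -- a third leaf
    obtain ⟨l0, hl0, hl0i, hl0j⟩ : ∃ l0, T.IsLeaf l0 ∧ l0 ≠ i ∧ l0 ≠ j := by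
      by_contra h
      push_neg at h
      have hsub : {v : T.V | T.IsLeaf v} ⊆ {i, j} := by
        intro x hx
        by_cases hxi : x = i
        · exact Or.inl hxi
        · exact Or.inr (h x hx hxi)
      have h1 := Set.ncard_le_ncard hsub (Set.toFinite _)
      have h2 : ({i, j} : Set T.V).ncard ≤ 2 :=
        (Set.ncard_insert_le _ _).trans (by simp)
      omega
    -- the neighbors of i and j
    obtain ⟨u, hu⟩ := Finset.card_eq_one.mp
      ((T.G.card_neighborFinset_eq_degree i).trans hi)
    have hiu : T.G.Adj i u := by
      rw [← SimpleGraph.mem_neighborFinset, hu]; exact Finset.mem_singleton_self u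
    obtain ⟨v, hv⟩ := Finset.card_eq_one.mp
      ((T.G.card_neighborFinset_eq_degree j).trans hj)
    have hjv : T.G.Adj j v := by
      rw [← SimpleGraph.mem_neighborFinset, hv]; exact Finset.mem_singleton_self v
    have huv : u ≠ v := by
      rintro rfl
      exact hno ⟨u, hiu.symm, hjv.symm⟩
    have huj : u ≠ j := by
      rintro rfl
      exact no_third_vertex' T.connected hl0i.symm hl0j.symm
        (fun m hm => T.leaf_adj_eq hi hm hiu)
        (fun m hm => T.leaf_adj_eq hj hm hiu.symm)
    have hvi : v ≠ i := by
      rintro rfl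
      exact no_third_vertex' T.connected hl0j.symm hl0i.symm
        (fun m hm => T.leaf_adj_eq hj hm hjv)
        (fun m hm => T.leaf_adj_eq hi hm hjv.symm)
    have hdegu : T.G.degree u = 3 := by
      rcases T.cubic u with h1 | h3
      · exact absurd (no_third_vertex' T.connected huj hij
          (fun m hm => T.leaf_adj_eq h1 hm hiu.symm)
          (fun m hm => T.leaf_adj_eq hi hm hiu)) id
      · exact h3
    have hdegv : T.G.degree v = 3 := by
      rcases T.cubic v with h1 | h3
      · exact absurd (no_third_vertex' T.connected hvi hij.symm
          (fun m hm => T.leaf_adj_eq h1 hm hjv.symm)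
          (fun m hm => T.leaf_adj_eq hj hm hjv)) id
      · exact h3
    obtain ⟨l1, hl1, hl1i, hl1j, heq1⟩ := T.engine hi hj hiu hjv huv hdegu
    obtain ⟨l2, hl2, hl2j, hl2i, heq2⟩ := T.engine hj hi hjv hiu huv.symm hdegv
    have hc1 := hc l1 hl1 hl1i hl1j
    have hc2 := hc l2 hl2 hl2i hl2j
    have hpos1 := T.dist_pos huv
    have hpos2 := T.dist_pos huv.symm
    -- heq2 : dist j l2 - dist i l2 = w(jv) - w(iu) - dist u v
    linarith [heq1, heq2, hc1, hc2]
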